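/- Let R be an affine root system (n = 1) of rank l and let Π be a base of R. Then R ∖ 2R = W_Π·Π := {w(α) : w ∈ W_Π, α ∈ Π}, and W_R = W_Π. -/

import Mathlib

/- ## Preliminaries: extended affine root systems (Saito) -/

noncomputable section

open Set

/-- The reflection `s_v : z ↦ z - (v^∨, z) v = z - (2 (v,z)/(v,v)) v` associated to a
bilinear form `B` and a vector `v`.  (When `B v v = 0` this is the identity, by the
`division by zero = 0` convention; reflections are only ever used at non-isotropic `v`.) -/
def srefl {V : Type*} [AddCommGroup V] [Module ℝ V]
    (B : LinearMap.BilinForm ℝ V) (v : V) : Module.End ℝ V :=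
  LinearMap.id - (((2 * (B v v)⁻¹) • (B v)).smulRight v)

/-- The Weyl group `W_S` generated by the reflections in the elements of `S`
(realized as the multiplicative closure; each generator is an involution, so this
agrees with the generated group). -/
def weyl {V : Type*} [AddCommGroup V] [Module ℝ V]
    (B : LinearMap.BilinForm ℝ V) (S : Set V) : Submonoid (Module.End ℝ V) :=
  Submonoid.closure (srefl B '' S)

/-- The orbit `W_S · α`. -/
def worbit {V : Type*} [AddCommGroup V] [Module ℝ V]
    (B : LinearMap.BilinForm ℝ V) (S : Set V) (α : V) : Set V :=
  {v | ∃ w ∈ weyl B S, w α = v}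

/-- `V⁰`, the set of isotropic vectors. -/
def nullSet {V : Type*} [AddCommGroup V] [Module ℝ V]
    (B : LinearMap.BilinForm ℝ V) : Set V := {v | B v v = 0}

/-- `ℤR`, the subgroup of `V` generated by `R`. -/
def zspan {V : Type*} [AddCommGroup V] (R : Set V) : AddSubgroup V :=
  AddSubgroup.closure R

/-- `ℤ≥0 Π`, the set of nonnegative-integer linear combinations of elements of `Π`. -/
def nnspan {V : Type*} [AddCommMonoid V] (P : Set V) : Set V :=
  (AddSubmonoid.closure P : Set V)

/-- `(R, V)` is an `n`-extended affine root system of rank `l` (K. Saito). -/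
structure IsEARS {V : Type*} [AddCommGroup V] [Module ℝ V]
    (B : LinearMap.BilinForm ℝ V) (R : Set V) (l n : ℕ) : Prop where
  rank_pos : 1 ≤ l
  findim : FiniteDimensional ℝ V
  symm : ∀ u v, B u v = B v u
  posSemidef : ∀ v, 0 ≤ B v v
  dim_eq : Module.finrank ℝ V = l + n
  null_eq : nullSet B = (LinearMap.ker B : Set V)
  dim_null : Module.finrank ℝ (LinearMap.ker B) = n
  /-- (AX1), first half -/
  root_nonisotropic : ∀ α ∈ R, B α α ≠ 0
  /-- (AX1), second half -/
  span_eq_top : Submodule.span ℝ R = ⊤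
  /-- (AX2) -/
  free : Module.Free ℤ (zspan R)
  /-- (AX2) -/
  rank_eq : Module.finrank ℤ (zspan R) = l + n
  /-- (AX3): `(α^∨, β) ∈ ℤ` -/
  integral : ∀ α ∈ R, ∀ β ∈ R, ∃ m : ℤ, 2 * B α β = (m : ℝ) * B α α
  /-- (AX4) -/
  reflect : ∀ α ∈ R, srefl B α '' R = R
  /-- (AX5) -/
  connected : ∀ S' ⊆ R, S'.Nonempty → S' ≠ R → ∃ x ∈ S', ∃ y ∈ R \ S', B x y ≠ 0

/-- `R` is reduced, i.e. `R ∩ 2R = ∅`. -/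
def IsReducedRS {V : Type*} [AddCommGroup V] [Module ℝ V] (R : Set V) : Prop :=
  ∀ α ∈ R, (2 : ℤ) • α ∉ R

/-- `Π₀` is a base (with `m` elements) of the root system `R₀`:
`Π₀ ⊆ R₀`, `Π₀` consists of `m` linearly independent elements, and
`R₀ = (R₀ ∩ ℤ≥0 Π₀) ∪ (R₀ ∩ ℤ≤0 Π₀)`. -/
def IsBaseSet {M : Type*} [AddCommGroup M] [Module ℝ M] (R₀ P₀ : Set M) (m : ℕ) : Prop :=
  P₀ ⊆ R₀ ∧ P₀.Finite ∧ P₀.ncard = m ∧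
  LinearIndependent ℝ ((↑) : P₀ → M) ∧
  R₀ = (R₀ ∩ nnspan P₀) ∪ (R₀ ∩ (-(nnspan P₀)))

/-- The bilinear form induced on a quotient `V ⧸ W` by a form vanishing on `W`. -/
def quotForm {V : Type*} [AddCommGroup V] [Module ℝ V]
    (W : Submodule ℝ V) (B : LinearMap.BilinForm ℝ V)
    (h1 : ∀ w ∈ W, B w = 0) (h2 : ∀ v : V, ∀ w ∈ W, B v w = 0) :
    LinearMap.BilinForm ℝ (V ⧸ W) :=
  Submodule.liftQ W
    { toFun := fun v => Submodule.liftQ W (B v) (fun w hw => LinearMap.mem_ker.mpr (h2 v w hw))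
      map_add' := fun u v => by
        ext x
        simp
      map_smul' := fun c v => by
        ext x
        simp }
    (fun w hw => by
      simp only [LinearMap.mem_ker]
      ext x
      simp [h1 w hw])

end
section helpers
variable {V : Type*} [AddCommGroup V] [Module ℝ V] (B : LinearMap.BilinForm ℝ V)

lemma srefl_apply (v x : V) : srefl B v x = x - (2 * (B v v)⁻¹ * B v x) • v := by
  simp only [srefl, LinearMap.sub_apply, LinearMap.id_apply, LinearMap.smulRight_apply,
    LinearMap.smul_apply, smul_eq_mul]

lemma srefl_self (v : V) (hv : B v v ≠ 0) : srefl B v v = -v := by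
  rw [srefl_apply]
  rw [mul_assoc, inv_mul_cancel₀ hv, mul_one, two_smul]
  abel

lemma srefl_srefl (v : V) (x : V) : srefl B v (srefl B v x) = x := by
  by_cases hv : B v v = 0
  · simp [srefl_apply, hv]
  · have h1 : srefl B v (srefl B v x)
        = srefl B v x - (2 * (B v v)⁻¹ * B v x) • srefl B v v := by
      conv_lhs => rw [srefl_apply B v x]
      rw [map_sub, map_smul]
    rw [h1, srefl_self B v hv, srefl_apply, smul_neg]
    abel

lemma srefl_isometry (hs : ∀ u w, B u w = B w u) (v x y : V) :
    B (srefl B v x) (srefl B v y) = B x y := by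
  by_cases hv : B v v = 0
  · simp [srefl_apply, hv]
  · simp only [srefl_apply, map_sub, map_smul, LinearMap.sub_apply, LinearMap.smul_apply,
      smul_eq_mul]
    have h1 : B x v = B v x := hs x v
    rw [h1]
    field_simp
    ring

lemma srefl_smul (c : ℝ) (hc : c ≠ 0) (v : V) : srefl B (c • v) = srefl B v := by
  unfold srefl
  congr 1
  ext x
  simp only [LinearMap.smulRight_apply, LinearMap.smul_apply, map_smul, smul_eq_mul,
    LinearMap.map_smul₂, smul_smul]
  congr 1
  by_cases h : (B v) v = 0
  · simp [h]
  · field_simp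

end helpers
section helpers2
variable {V : Type*} [AddCommGroup V] [Module ℝ V] (B : LinearMap.BilinForm ℝ V)

lemma srefl_mem_weyl {S : Set V} {v : V} (hv : v ∈ S) : srefl B v ∈ weyl B S :=
  Submonoid.subset_closure (Set.mem_image_of_mem _ hv)

lemma srefl_mul_self (v : V) : srefl B v * srefl B v = 1 := by
  ext x
  simp [Module.End.mul_apply, srefl_srefl]

lemma weyl_maps_root {S R : Set V} (hSR : S ⊆ R) (hR : ∀ α ∈ R, srefl B α '' R = R)
    {w : Module.End ℝ V} (hw : w ∈ weyl B S) : ∀ x ∈ R, w x ∈ R := by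
  induction hw using Submonoid.closure_induction with
  | mem u hu =>
    obtain ⟨v, hv, rfl⟩ := hu
    intro x hx
    rw [← hR v (hSR hv)]
    exact Set.mem_image_of_mem _ hx
  | one => intro x hx; simpa using hx
  | mul a b _ _ ha hb =>
    intro x hx
    rw [Module.End.mul_apply]
    exact ha _ (hb x hx)

lemma weyl_isometry {S : Set V} (hs : ∀ u w, B u w = B w u)
    {w : Module.End ℝ V} (hw : w ∈ weyl B S) : ∀ x y, B (w x) (w y) = B x y := by
  induction hw using Submonoid.closure_induction with
  | mem u hu =>
    obtain ⟨v, hv, rfl⟩ := hu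
    exact srefl_isometry B hs v
  | one => intro x y; simp
  | mul a b _ _ ha hb =>
    intro x y
    simp only [Module.End.mul_apply]
    rw [ha, hb]

lemma weyl_inv {S : Set V} {w : Module.End ℝ V} (hw : w ∈ weyl B S) :
    ∃ w' ∈ weyl B S, w' * w = 1 ∧ w * w' = 1 := by
  induction hw using Submonoid.closure_induction with
  | mem u hu =>
    obtain ⟨v, hv, rfl⟩ := hu
    exact ⟨srefl B v, srefl_mem_weyl B hv, srefl_mul_self B v, srefl_mul_self B v⟩
  | one => exact ⟨1, one_mem _, one_mul 1, one_mul 1⟩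
  | mul a b ha hb iha ihb =>
    obtain ⟨a', ha', ha1, ha2⟩ := iha
    obtain ⟨b', hb', hb1, hb2⟩ := ihb
    refine ⟨b' * a', mul_mem hb' ha', ?_, ?_⟩
    · rw [mul_assoc, ← mul_assoc a', ha1, one_mul, hb1]
    · rw [mul_assoc, ← mul_assoc b, hb2, one_mul, ha2]

lemma srefl_conj (w w' : Module.End ℝ V) (h1 : w * w' = 1)
    (hiso : ∀ x y, B (w x) (w y) = B x y) (α : V) :
    srefl B (w α) = w * srefl B α * w' := by
  have hww' : ∀ x, w (w' x) = x := fun x => by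
    have := LinearMap.ext_iff.mp h1 x
    simpa [Module.End.mul_apply] using this
  ext x
  rw [Module.End.mul_apply, Module.End.mul_apply, srefl_apply, srefl_apply, map_sub, map_smul, hww']
  have e1 : B (w α) (w α) = B α α := hiso α α
  have e2 : B (w α) x = B α (w' x) := by
    calc B (w α) x = B (w α) (w (w' x)) := by rw [hww']
    _ = B α (w' x) := hiso _ _
  rw [e1, e2]

end helpers2
set_option linter.unusedSectionVars false
section helpers3
variable {V : Type*} [AddCommGroup V] [Module ℝ V]

/-- The linear combination map. -/
noncomputable abbrev TT : (V →₀ ℝ) →ₗ[ℝ] V := Finsupp.linearCombination ℝ id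

noncomputable def toRealF (f : V →₀ ℕ) : V →₀ ℝ := f.mapRange Nat.cast Nat.cast_zero

lemma toRealF_apply (f : V →₀ ℕ) (v : V) : toRealF f v = f v := rfl

lemma toRealF_support (f : V →₀ ℕ) : (toRealF f).support = f.support :=
  Finsupp.support_mapRange_of_injective Nat.cast_zero f Nat.cast_injective

lemma TT_toRealF (f : V →₀ ℕ) : TT (toRealF f) = f.sum fun v n => n • v := by
  rw [Finsupp.linearCombination_apply, toRealF, Finsupp.sum_mapRange_index (by simp)]
  refine Finsupp.sum_congr fun v _ => ?_
  rw [id_eq, Nat.cast_smul_eq_nsmul]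

lemma TT_single (p : V) (c : ℝ) : TT (Finsupp.single p c) = c • p := by
  rw [Finsupp.linearCombination_single, id_eq]

lemma lin_rel {P : Set V} (li : LinearIndependent ℝ ((↑) : P → V))
    (c : V →₀ ℝ) (hsupp : ↑c.support ⊆ P) (hsum : TT c = 0) : c = 0 :=
  linearIndepOn_iff.mp (linearIndependent_subtype_iff.mp li) c ((Finsupp.mem_supported ℝ c).mpr hsupp) hsum

lemma mem_nnspan_iff {P : Set V} {β : V} :
    β ∈ nnspan P ↔ ∃ f : V →₀ ℕ, ↑f.support ⊆ P ∧ (f.sum fun v n => n • v) = β := by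
  have h : β ∈ nnspan P ↔ β ∈ Submodule.span ℕ P := by
    rw [nnspan, ← Submodule.span_nat_eq_addSubmonoidClosure]; rfl
  rw [h, Submodule.mem_span_set]

/-- Height of a nonnegative combination. -/
def htF (f : V →₀ ℕ) : ℕ := f.sum fun _ n => n

lemma ht_lt {f g : V →₀ ℕ} {p : V} (hne : ∀ v, v ≠ p → g v = f v) (hp : g p < f p) :
    htF g < htF f := by
  classical
  set u := f.support ∪ g.support with hu
  have hf : htF f = ∑ v ∈ u, f v :=
    Finsupp.sum_of_support_subset f Finset.subset_union_left _ (by simp)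
  have hg : htF g = ∑ v ∈ u, g v :=
    Finsupp.sum_of_support_subset g Finset.subset_union_right _ (by simp)
  have hpu : p ∈ u := by
    apply Finset.mem_union_left
    rw [Finsupp.mem_support_iff]
    omega
  rw [hf, hg]
  exact Finset.sum_lt_sum (fun i _ => by rcases eq_or_ne i p with rfl | h
                                         · exact le_of_lt hp
                                         · exact (hne i h).le) ⟨p, hpu, hp⟩

end helpers3
section helpers4
variable {V : Type*} [AddCommGroup V] [Module ℝ V]
  {B : LinearMap.BilinForm ℝ V} {R : Set V} {l : ℕ} {P : Set V}

lemma root_pos (hE : IsEARS B R l 1) {β : V} (hβ : β ∈ R) : 0 < B β β :=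
  lt_of_le_of_ne (hE.posSemidef β) (Ne.symm (hE.root_nonisotropic β hβ))

lemma neg_root (hE : IsEARS B R l 1) {β : V} (hβ : β ∈ R) : -β ∈ R := by
  have h := hE.reflect β hβ
  rw [← h]
  exact ⟨β, hβ, srefl_self B β (hE.root_nonisotropic β hβ)⟩

lemma root_sum_form {β : V} (f : V →₀ ℕ)
    (hfsum : (f.sum fun v n => n • v) = β) :
    B β β = ∑ v ∈ f.support, (f v : ℝ) * B v β := by
  have h1 : (B β : V →ₗ[ℝ] ℝ) = ∑ v ∈ f.support, f v • B v := by
    rw [← hfsum, Finsupp.sum, map_sum]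
    exact Finset.sum_congr rfl fun v _ => map_nsmul B _ _
  calc B β β = (∑ v ∈ f.support, f v • B v) β := by rw [← h1]
  _ = ∑ v ∈ f.support, (f v : ℝ) * B v β := by
      rw [LinearMap.sum_apply]
      exact Finset.sum_congr rfl fun v _ => by rw [LinearMap.smul_apply, nsmul_eq_mul]

end helpers4
section helpers5
variable {V : Type*} [AddCommGroup V] [Module ℝ V]
  {B : LinearMap.BilinForm ℝ V} {R : Set V} {l : ℕ} {P : Set V}

lemma orbit_of_pos (hE : IsEARS B R l 1) (hbase : IsBaseSet R P (l + 1)) :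
    ∀ N : ℕ, ∀ β ∈ R, β ∉ (fun v : V => (2 : ℤ) • v) '' R →
      ∀ f : V →₀ ℕ, ↑f.support ⊆ P → (f.sum fun v n => n • v) = β → htF f = N →
      ∃ w ∈ weyl B P, ∃ α ∈ P, w α = β := by
  classical
  obtain ⟨hPR, hPfin, hPcard, li, hsplit⟩ := hbase
  intro N
  induction N using Nat.strong_induction_on with
  | _ N ih =>
  intro β hβR hβ2 f hfs hfsum hht
  have hβpos : 0 < B β β := root_pos hE hβR
  have key := root_sum_form (B := B) f hfsum
  have hex : ∃ v ∈ f.support, 0 < (f v : ℝ) * B v β := by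
    by_contra h
    push_neg at h
    have : B β β ≤ 0 := key ▸ Finset.sum_nonpos h
    linarith
  obtain ⟨p, hpsupp, hppos⟩ := hex
  have hpP : p ∈ P := hfs hpsupp
  have hpR : p ∈ R := hPR hpP
  have hBpp : 0 < B p p := root_pos hE hpR
  have hfp : 0 < f p := Nat.pos_of_ne_zero (Finsupp.mem_support_iff.mp hpsupp)
  have hBpβ : 0 < B p β := by
    rcases lt_or_ge 0 (B p β) with h | h
    · exact h
    · exfalso
      have : (f p : ℝ) * B p β ≤ 0 :=
        mul_nonpos_of_nonneg_of_nonpos (Nat.cast_nonneg _) h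
      linarith
  obtain ⟨m, hm⟩ := hE.integral p hpR β hβR
  have hm1 : 1 ≤ m := by
    by_contra h
    push_neg at h
    have hm0 : m ≤ 0 := by omega
    have : (m : ℝ) ≤ 0 := by exact_mod_cast hm0
    nlinarith
  have hmR : (1 : ℝ) ≤ (m : ℝ) := by exact_mod_cast hm1
  set γ := srefl B p β with hγdef
  have hγ : γ = β - (m : ℝ) • p := by
    rw [hγdef, srefl_apply]
    congr 2
    field_simp
    linarith [hm]
  have hγR : γ ∈ R := by
    rw [← hE.reflect p hpR]
    exact Set.mem_image_of_mem _ hβR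
  have hγ2 : γ ∉ (fun v : V => (2 : ℤ) • v) '' R := by
    rintro ⟨δ, hδR, hδeq⟩
    apply hβ2
    have hδeq' : (2 : ℤ) • δ = γ := hδeq
    refine ⟨srefl B p δ, ?_, ?_⟩
    · rw [← hE.reflect p hpR]; exact Set.mem_image_of_mem _ hδR
    · show (2 : ℤ) • srefl B p δ = β
      rw [← map_zsmul (srefl B p), hδeq', hγdef, srefl_srefl]
  by_cases hq : ∃ q ∈ f.support, q ≠ p
  · -- main case: reflection decreases height
    obtain ⟨q, hqsupp, hqp⟩ := hq
    have hfq : f q ≠ 0 := Finsupp.mem_support_iff.mp hqsupp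
    have hγnn : γ ∈ nnspan P := by
      have hsp := hsplit ▸ hγR
      rcases hsp with h | h
      · exact h.2
      · exfalso
        have hneg : -γ ∈ nnspan P := by
          have := h.2
          rwa [Set.mem_neg] at this
        obtain ⟨g, hgs, hgsum⟩ := mem_nnspan_iff.mp hneg
        set c : V →₀ ℝ := toRealF f + toRealF g - (m : ℝ) • Finsupp.single p 1 with hc
        have hTTc : TT c = 0 := by
          rw [hc]
          simp only [map_sub, map_add, map_smul, TT_toRealF, TT_single, hfsum, hgsum, one_smul]
          simp only [hγ]
          abel
        have hcs : ↑c.support ⊆ P := by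
          intro v hv
          have hv' := Finsupp.support_sub (f := toRealF f + toRealF g)
            (g := (m : ℝ) • Finsupp.single p 1) hv
          rcases Finset.mem_union.mp hv' with h1 | h1
          · rcases Finset.mem_union.mp (Finsupp.support_add h1) with h2 | h2
            · exact hfs (by rwa [toRealF_support] at h2)
            · exact hgs (by rwa [toRealF_support] at h2)
          · have h2 := Finsupp.support_smul h1
            have h3 := Finsupp.support_single_subset h2
            simp only [Finset.mem_singleton] at h3
            exact h3 ▸ hpP
        have hc0 := lin_rel li c hcs hTTc
        have hz := DFunLike.congr_fun hc0 q
        rw [hc] at hz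
        simp only [Finsupp.coe_sub, Finsupp.coe_add, Pi.sub_apply, Pi.add_apply,
          Finsupp.smul_apply, Finsupp.single_apply, smul_eq_mul, toRealF_apply,
          Finsupp.coe_zero, Pi.zero_apply, if_neg (Ne.symm hqp), mul_zero, sub_zero] at hz
        have h1 : (0 : ℝ) ≤ f q := Nat.cast_nonneg _
        have h2 : (0 : ℝ) ≤ g q := Nat.cast_nonneg _
        have h3 : (f q : ℝ) = 0 := by linarith
        exact hfq (by exact_mod_cast h3)
    obtain ⟨g, hgs, hgsum⟩ := mem_nnspan_iff.mp hγnn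
    set c : V →₀ ℝ := toRealF f - toRealF g - (m : ℝ) • Finsupp.single p 1 with hc
    have hTTc : TT c = 0 := by
      rw [hc]
      simp only [map_sub, map_smul, TT_toRealF, TT_single, hfsum, hgsum, one_smul]
      simp only [hγ]
      abel
    have hcs : ↑c.support ⊆ P := by
      intro v hv
      have hv' := Finsupp.support_sub (f := toRealF f - toRealF g)
        (g := (m : ℝ) • Finsupp.single p 1) hv
      rcases Finset.mem_union.mp hv' with h1 | h1
      · rcases Finset.mem_union.mp (Finsupp.support_sub h1) with h2 | h2
        · exact hfs (by rwa [toRealF_support] at h2)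
        · exact hgs (by rwa [toRealF_support] at h2)
      · have h2 := Finsupp.support_smul h1
        have h3 := Finsupp.support_single_subset h2
        simp only [Finset.mem_singleton] at h3
        exact h3 ▸ hpP
    have hc0 := lin_rel li c hcs hTTc
    have hpt : ∀ v : V, (f v : ℝ) - g v - (m : ℝ) * (if p = v then (1:ℝ) else 0) = 0 := by
      intro v
      have hz := DFunLike.congr_fun hc0 v
      rw [hc] at hz
      simpa only [Finsupp.coe_sub, Pi.sub_apply, Finsupp.smul_apply, Finsupp.single_apply,
        smul_eq_mul, toRealF_apply, Finsupp.coe_zero, Pi.zero_apply] using hz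
    have hne : ∀ v, v ≠ p → g v = f v := by
      intro v hv
      have h1 := hpt v
      rw [if_neg (Ne.symm hv), mul_zero, sub_zero] at h1
      have : (g v : ℝ) = f v := by linarith
      exact_mod_cast this
    have hglt : g p < f p := by
      have h1 := hpt p
      rw [if_pos rfl, mul_one] at h1
      have : (g p : ℝ) < f p := by linarith
      exact_mod_cast this
    have hhtlt : htF g < N := hht ▸ ht_lt hne hglt
    obtain ⟨w, hw, α, hα, hwα⟩ := ih (htF g) hhtlt γ hγR hγ2 g hgs hgsum rfl
    refine ⟨srefl B p * w, mul_mem (srefl_mem_weyl B hpP) hw, α, hα, ?_⟩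
    rw [Module.End.mul_apply, hwα, hγdef, srefl_srefl]
  · -- support is {p}: β = (f p) • p with f p ∈ {1, 2}
    push_neg at hq
    have hsupp_eq : f.support = {p} := by
      apply Finset.eq_singleton_iff_unique_mem.mpr
      exact ⟨hpsupp, fun x hx => hq x hx⟩
    have hβfp : β = f p • p := by
      rw [← hfsum, Finsupp.sum, hsupp_eq, Finset.sum_singleton]
    obtain ⟨m', hm'⟩ := hE.integral β hβR p hpR
    have hBβp : B β p = (f p : ℝ) * B p p := by
      rw [hβfp, map_nsmul, LinearMap.smul_apply, nsmul_eq_mul]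
    have hBββ : B β β = (f p : ℝ) * ((f p : ℝ) * B p p) := by
      have e1 : B (f p • p) = f p • B p := map_nsmul B (f p) p
      rw [hβfp, e1, LinearMap.smul_apply, map_nsmul, nsmul_eq_mul, nsmul_eq_mul]
    rw [hBβp, hBββ] at hm'
    have hne0 : (f p : ℝ) * B p p ≠ 0 := by positivity
    have h3 : (2 : ℝ) * ((f p : ℝ) * B p p) = ((m' : ℝ) * f p) * ((f p : ℝ) * B p p) := by
      rw [hm']; ring
    have hfp2 : (2 : ℝ) = (m' : ℝ) * f p := mul_right_cancel₀ hne0 h3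
    have hfpz : (2 : ℤ) = m' * (f p : ℤ) := by exact_mod_cast hfp2
    have hdvd : ((f p : ℤ)) ∣ 2 := ⟨m', by linear_combination hfpz⟩
    have hfple : f p ≤ 2 := by
      have := Int.le_of_dvd (by norm_num) hdvd
      exact_mod_cast this
    have hfp12 : f p = 1 ∨ f p = 2 := by omega
    rcases hfp12 with h | h
    · refine ⟨1, one_mem _, p, hpP, ?_⟩
      show (1 : Module.End ℝ V) p = β
      rw [Module.End.one_apply, hβfp, h, one_nsmul]
    · exfalso
      apply hβ2
      refine ⟨p, hpR, ?_⟩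
      show (2 : ℤ) • p = β
      rw [hβfp, h]
      simpa using natCast_zsmul p 2

end helpers5
section helpers6
variable {V : Type*} [AddCommGroup V] [Module ℝ V]
  {B : LinearMap.BilinForm ℝ V} {R : Set V} {l : ℕ} {P : Set V}

lemma P_not_double (hE : IsEARS B R l 1) (hbase : IsBaseSet R P (l + 1)) :
    ∀ α ∈ P, α ∉ (fun v : V => (2 : ℤ) • v) '' R := by
  classical
  obtain ⟨hPR, hPfin, hPcard, li, hsplit⟩ := hbase
  rintro α hα ⟨δ, hδR, hδeq⟩
  have hδeq' : (2 : ℤ) • δ = α := hδeq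
  have h2r : ((2 : ℝ)) • δ = (2 : ℤ) • δ := by
    have := Int.cast_smul_eq_zsmul ℝ (2 : ℤ) δ
    simpa using this
  have hδsp := hsplit ▸ hδR
  rcases hδsp with h | h
  · obtain ⟨f, hfs, hfsum⟩ := mem_nnspan_iff.mp h.2
    set c : V →₀ ℝ := Finsupp.single α 1 - (2 : ℝ) • toRealF f with hc
    have hTTc : TT c = 0 := by
      rw [hc]
      simp only [map_sub, map_smul, TT_toRealF, TT_single, hfsum, one_smul]
      rw [h2r, hδeq']
      abel
    have hcs : ↑c.support ⊆ P := by
      intro v hv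
      have hv' := Finsupp.support_sub (f := Finsupp.single α 1)
        (g := (2 : ℝ) • toRealF f) hv
      rcases Finset.mem_union.mp hv' with h1 | h1
      · have h3 := Finsupp.support_single_subset h1
        simp only [Finset.mem_singleton] at h3
        exact h3 ▸ hα
      · have h2 := Finsupp.support_smul h1
        rw [toRealF_support] at h2
        exact hfs h2
    have hc0 := lin_rel li c hcs hTTc
    have hz := DFunLike.congr_fun hc0 α
    rw [hc] at hz
    simp only [Finsupp.coe_sub, Pi.sub_apply, Finsupp.smul_apply, Finsupp.single_apply,
      if_pos rfl, toRealF_apply, smul_eq_mul, Finsupp.coe_zero, Pi.zero_apply] at hz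
    norm_num at hz
    have hzr : 2 * (f α : ℝ) = 1 := by linarith
    have hz' : (2 : ℤ) * (f α : ℤ) = 1 := by exact_mod_cast hzr
    omega
  · have hneg : -δ ∈ nnspan P := by
      have := h.2
      rwa [Set.mem_neg] at this
    obtain ⟨f, hfs, hfsum⟩ := mem_nnspan_iff.mp hneg
    set c : V →₀ ℝ := Finsupp.single α 1 + (2 : ℝ) • toRealF f with hc
    have hTTc : TT c = 0 := by
      rw [hc]
      simp only [map_add, map_smul, TT_toRealF, TT_single, hfsum, one_smul]
      rw [smul_neg, h2r, hδeq']
      abel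
    have hcs : ↑c.support ⊆ P := by
      intro v hv
      have hv' := Finsupp.support_add (g₁ := Finsupp.single α 1)
        (g₂ := (2 : ℝ) • toRealF f) hv
      rcases Finset.mem_union.mp hv' with h1 | h1
      · have h3 := Finsupp.support_single_subset h1
        simp only [Finset.mem_singleton] at h3
        exact h3 ▸ hα
      · have h2 := Finsupp.support_smul h1
        rw [toRealF_support] at h2
        exact hfs h2
    have hc0 := lin_rel li c hcs hTTc
    have hz := DFunLike.congr_fun hc0 α
    rw [hc] at hz
    simp only [Finsupp.coe_add, Pi.add_apply, Finsupp.smul_apply, Finsupp.single_apply,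
      if_pos rfl, toRealF_apply, smul_eq_mul, Finsupp.coe_zero, Pi.zero_apply] at hz
    norm_num at hz
    have h1 : (0 : ℝ) ≤ (f α : ℝ) := Nat.cast_nonneg _
    linarith

lemma orbit_in (hE : IsEARS B R l 1) (hbase : IsBaseSet R P (l + 1))
    {w : Module.End ℝ V} (hw : w ∈ weyl B P) {α : V} (hα : α ∈ P) :
    w α ∈ R \ ((fun v : V => (2 : ℤ) • v) '' R) := by
  have hPR : P ⊆ R := hbase.1
  constructor
  · exact weyl_maps_root B hPR hE.reflect hw α (hPR hα)
  · rintro ⟨δ, hδR, hδeq⟩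
    have hδeq' : (2 : ℤ) • δ = w α := hδeq
    obtain ⟨w', hw', hw'w, hww'⟩ := weyl_inv B hw
    have hα' : w' (w α) = α := by
      have := LinearMap.ext_iff.mp hw'w α
      simpa [Module.End.mul_apply] using this
    apply P_not_double hE hbase α hα
    refine ⟨w' δ, weyl_maps_root B hPR hE.reflect hw' δ hδR, ?_⟩
    show (2 : ℤ) • w' δ = α
    rw [← map_zsmul w', hδeq', hα']

lemma orbit_eq (hE : IsEARS B R l 1) (hbase : IsBaseSet R P (l + 1)) :
    R \ ((fun v : V => (2 : ℤ) • v) '' R)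
      = {v | ∃ w ∈ weyl B P, ∃ α ∈ P, w α = v} := by
  have hPR : P ⊆ R := hbase.1
  have hsplit := hbase.2.2.2.2
  ext x
  constructor
  · rintro ⟨hxR, hx2⟩
    have hxsp := hsplit ▸ hxR
    rcases hxsp with h | h
    · obtain ⟨f, hfs, hfsum⟩ := mem_nnspan_iff.mp h.2
      exact orbit_of_pos hE hbase (htF f) x hxR hx2 f hfs hfsum rfl
    · have hneg : -x ∈ nnspan P := by
        have := h.2
        rwa [Set.mem_neg] at this
      have hnegR : -x ∈ R := neg_root hE hxR
      have hneg2 : -x ∉ (fun v : V => (2 : ℤ) • v) '' R := by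
        rintro ⟨δ, hδR, hδeq⟩
        have hδeq' : (2 : ℤ) • δ = -x := hδeq
        exact hx2 ⟨-δ, neg_root hE hδR, by
          show (2 : ℤ) • (-δ) = x
          rw [smul_neg, hδeq', neg_neg]⟩
      obtain ⟨f, hfs, hfsum⟩ := mem_nnspan_iff.mp hneg
      obtain ⟨w, hw, α, hα, hwα⟩ :=
        orbit_of_pos hE hbase (htF f) (-x) hnegR hneg2 f hfs hfsum rfl
      refine ⟨w * srefl B α, mul_mem hw (srefl_mem_weyl B hα), α, hα, ?_⟩
    
      rw [Module.End.mul_apply, srefl_self B α (hE.root_nonisotropic α (hPR hα)),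
        map_neg, hwα, neg_neg]
  · rintro ⟨w, hw, α, hα, rfl⟩
    exact orbit_in hE hbase hw hα

lemma srefl_mem_weylP (hE : IsEARS B R l 1) (hbase : IsBaseSet R P (l + 1))
    {β : V} (hβR : β ∈ R) (hβ2 : β ∉ (fun v : V => (2 : ℤ) • v) '' R) :
    srefl B β ∈ weyl B P := by
  have hβorb : β ∈ {v | ∃ w ∈ weyl B P, ∃ α ∈ P, w α = v} := by
    rw [← orbit_eq hE hbase]; exact ⟨hβR, hβ2⟩
  obtain ⟨w, hw, α, hα, hwα⟩ := hβorb
  obtain ⟨w', hw', hw'w, hww'⟩ := weyl_inv B hw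
  have hiso := weyl_isometry B hE.symm hw
  rw [← hwα, srefl_conj B w w' hww' hiso α]
  exact mul_mem (mul_mem hw (srefl_mem_weyl B hα)) hw'

end helpers6
/-- For a base `Π` of an affine root system `R`:
`R ∖ 2R = W_Π · Π` and `W_R = W_Π`. -/
theorem stmt5 {V : Type*} [AddCommGroup V] [Module ℝ V]
    (B : LinearMap.BilinForm ℝ V) (R : Set V) (l : ℕ)
    (hE : IsEARS B R l 1)
    (P : Set V) (hbase : IsBaseSet R P (l + 1)) :
    R \ ((fun v : V => (2 : ℤ) • v) '' R)
        = {v | ∃ w ∈ weyl B P, ∃ α ∈ P, w α = v} ∧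
    weyl B R = weyl B P := by
  constructor
  · exact orbit_eq hE hbase
  · apply le_antisymm
    · apply Submonoid.closure_le.mpr
      rintro _ ⟨β, hβR, rfl⟩
      by_cases hβ2 : β ∈ (fun v : V => (2 : ℤ) • v) '' R
      · obtain ⟨γ, hγR, hγeq⟩ := hβ2
        have hγeq' : (2 : ℤ) • γ = β := hγeq
        have hγ2 : γ ∉ (fun v : V => (2 : ℤ) • v) '' R := by
          rintro ⟨δ, hδR, hδeq⟩
          have hδeq' : (2 : ℤ) • δ = γ := hδeq
          have hδne : B δ δ ≠ 0 := hE.root_nonisotropic δ hδR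
          obtain ⟨m, hm⟩ := hE.integral β hβR δ hδR
          have hβ4 : β = (4 : ℤ) • δ := by
            rw [← hγeq', ← hδeq', smul_smul]
            norm_num
          have hBβδ : B β δ = 4 * B δ δ := by
            rw [hβ4, map_zsmul, LinearMap.smul_apply, zsmul_eq_mul]
            norm_num
          have hBββ : B β β = 16 * B δ δ := by
            have e1 : B ((4 : ℤ) • δ) = (4 : ℤ) • B δ := map_zsmul B 4 δ
            rw [hβ4, e1, LinearMap.smul_apply, map_zsmul, zsmul_eq_mul, zsmul_eq_mul]
            push_cast
            ring
          rw [hBβδ, hBββ] at hm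
          have e : (8 : ℝ) * B δ δ = ((m : ℝ) * 16) * B δ δ := by linear_combination hm
          have e2 : (8 : ℝ) = (m : ℝ) * 16 := mul_right_cancel₀ hδne e
          have e3 : (8 : ℤ) = m * 16 := by exact_mod_cast e2
          omega
        have hsr : srefl B β = srefl B γ := by
          rw [← hγeq', ← Int.cast_smul_eq_zsmul ℝ 2 γ,
            srefl_smul B ((2 : ℤ) : ℝ) (by norm_num) γ]
        rw [hsr]
        exact srefl_mem_weylP hE hbase hγR hγ2
      · exact srefl_mem_weylP hE hbase hβR hβ2
    · exact Submonoid.closure_mono (Set.image_mono hbase.1)
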